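/- If G is a k-factor-critical graph of order n with 1 ≤ k < n and n + k even, then G is (k+1)-edge-connected. -/

import Mathlib

open SimpleGraph

variable {V : Type*}

/-- `G` has a perfect matching covering exactly the vertex set `A`
(i.e. the graph obtained from `G` by deleting the vertices outside `A` has a perfect matching). -/
def HasPMOn (G : SimpleGraph V) (A : Set V) : Prop :=
  ∃ M : G.Subgraph, M.verts = A ∧ M.IsMatching

/-- `G` is `k`-factor-critical: deleting any `k` vertices leaves a graph with a perfect matching. -/
def FactorCritical [Fintype V] (G : SimpleGraph V) (k : ℕ) : Prop :=
  ∀ S : Finset V, S.card = k → HasPMOn G ((↑S : Set V)ᶜ)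

/-- `G` is minimally `k`-factor-critical. -/
def MinFactorCritical [Fintype V] (G : SimpleGraph V) (k : ℕ) : Prop :=
  FactorCritical G k ∧ ∀ u v : V, G.Adj u v → ¬ FactorCritical (G.deleteEdges {s(u,v)}) k

/-- The number of odd connected components of a graph. -/
noncomputable def oddComponents {W : Type*} (G : SimpleGraph W) : ℕ :=
  Nat.card {c : G.ConnectedComponent // Odd (Nat.card c.supp)}

lemma key_lemma [Fintype V] (G : SimpleGraph V) (k : ℕ)
    (hG : FactorCritical G k) (Sreq W : Finset V)
    (hdisj : ∀ x ∈ W, x ∉ Sreq)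
    (hodd : Odd W.card)
    (hSk : Sreq.card ≤ k) (hWn : W.card + k ≤ Fintype.card V)
    (hnbr : ∀ x ∈ W, ∀ y, G.Adj x y → y ∈ W ∨ y ∈ Sreq) : False := by
  classical
  have hsub : Sreq ⊆ Wᶜ := fun x hx => Finset.mem_compl.2 (fun hxW => hdisj x hxW hx)
  have hcard : k ≤ Wᶜ.card := by
    have := Finset.card_compl (α := V) W
    omega
  obtain ⟨S, hS1, hS2, hS3⟩ := Finset.exists_subsuperset_card_eq hsub hSk hcard
  obtain ⟨M, hMv, hMm⟩ := hG S hS3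
  have hWS : ∀ x ∈ W, x ∉ S := fun x hx hxS => Finset.mem_compl.1 (hS2 hxS) hx
  have hMatch : (M.induce ↑W).IsMatching := by
    intro v hv
    have hvW : v ∈ W := hv
    have hvM : v ∈ M.verts := by
      rw [hMv]; exact fun h => hWS v hvW h
    obtain ⟨w, hw, hwu⟩ := hMm hvM
    have hwW : w ∈ W := by
      rcases hnbr v hvW w (M.adj_sub hw) with h | h
      · exact h
      · exfalso
        have hwv : w ∈ M.verts := hw.snd_mem
        rw [hMv] at hwv
        exact hwv (hS1 h)
    refine ⟨w, ⟨hvW, hwW, hw⟩, ?_⟩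
    rintro y ⟨_, _, hy⟩
    exact hwu y hy
  have heven := hMatch.even_card
  have hv : (M.induce ↑W).verts = (↑W : Set V) := rfl
  rw [Nat.even_iff] at heven
  rw [Nat.odd_iff] at hodd
  have : (M.induce ↑W).verts.toFinset.card = W.card := by
    simp [hv]
  omega

lemma side_lemma [Fintype V] [DecidableEq V] (G : SimpleGraph V) (k : ℕ) (hk1 : 1 ≤ k)
    (hkn : k < Fintype.card V)
    (hG : FactorCritical G k) (E : Finset (Sym2 V)) (hEk : E.card ≤ k)
    (P : Finset V) (hPne : P.Nonempty) (hPcne : Pᶜ.Nonempty) (hPle : P.card ≤ Pᶜ.card)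
    (hcross : ∀ x ∈ P, ∀ y, y ∉ P → G.Adj x y → s(x, y) ∈ E) : False := by
  classical
  set d : V → ℕ := fun v => (Pᶜ.filter (fun y => G.Adj v y)).card with hd
  set a := P.card with ha
  set b := Pᶜ.card with hb
  have hab : a + b = Fintype.card V := by
    rw [ha, hb]; exact Finset.card_add_card_compl P
  have ha1 : 1 ≤ a := Finset.card_pos.mpr hPne
  have hb1 : 1 ≤ b := Finset.card_pos.mpr hPcne
  -- sum of crossing degrees is at most |E|
  have hsum : ∑ v ∈ P, d v ≤ k := by
    set Ev : V → Finset (Sym2 V) := fun v => E.filter (fun e => ∃ y, y ∉ P ∧ e = s(v, y))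
      with hEv
    have h1 : ∀ v ∈ P, d v ≤ (Ev v).card := by
      intro v hv
      apply Finset.card_le_card_of_injOn (fun y => s(v, y))
      · intro y hy
        rw [Finset.mem_coe, Finset.mem_filter, Finset.mem_compl] at hy
        rw [hEv]
        simp only [Finset.mem_coe, Finset.mem_filter]
        exact ⟨hcross v hv y hy.1 hy.2, y, hy.1, rfl⟩
      · intro y hy y' hy' heq
        rw [Sym2.eq_iff] at heq
        rcases heq with ⟨_, h⟩ | ⟨h1', h2'⟩
        · exact h
        · exfalso
          simp only [Finset.coe_filter, Set.mem_setOf_eq, Finset.mem_compl] at hy'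
          rw [← h1'] at hy'
          exact hy'.1 hv
    have h2 : ∑ v ∈ P, (Ev v).card ≤ E.card := by
      rw [← Finset.card_biUnion]
      · exact Finset.card_le_card (Finset.biUnion_subset.mpr
          (fun v _ => Finset.filter_subset _ _))
      · intro v hv v' hv' hne
        show Disjoint (Ev v) (Ev v')
        rw [Finset.disjoint_left]
        intro e he he'
        rw [hEv] at he he'
        simp only [Finset.mem_filter] at he he'
        obtain ⟨_, y, hy, rfl⟩ := he
        obtain ⟨_, y', hy', heq⟩ := he'
        rw [Sym2.eq_iff] at heq
        rcases heq with ⟨h1', _⟩ | ⟨h1', h2'⟩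
        · exact hne h1'
        · rw [h2'] at hy
          exact hy hv'
    calc ∑ v ∈ P, d v ≤ ∑ v ∈ P, (Ev v).card := Finset.sum_le_sum h1
    _ ≤ E.card := h2
    _ ≤ k := hEk
  -- trivial fact: if x ∈ P has some crossing neighbor, d x > 0
  have hd_pos : ∀ x y, y ∉ P → G.Adj x y → 0 < d x := by
    intro x y hy hadj
    rw [hd]
    exact Finset.card_pos.mpr ⟨y, Finset.mem_filter.mpr ⟨Finset.mem_compl.mpr hy, hadj⟩⟩
  by_cases hak : a ≤ k
  · -- small side: find a vertex of minimum crossing degree and isolate it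
    obtain ⟨v, hvP, hvmin⟩ := P.exists_min_image d hPne
    have hmul : a * d v ≤ k := by
      have := Finset.card_nsmul_le_sum P d (d v) (fun x hx => hvmin x hx)
      rw [smul_eq_mul] at this
      exact le_trans (by rw [ha]) (le_trans this hsum)
    have harith : (a - 1) + d v ≤ k := by
      rcases Nat.eq_zero_or_pos (d v) with h0 | hpos
      · omega
      · have hmul' : (a : ℤ) * (d v : ℤ) ≤ (k : ℤ) := by exact_mod_cast hmul
        have ha1' : (1 : ℤ) ≤ (a : ℤ) := by exact_mod_cast ha1
        have hpos' : (1 : ℤ) ≤ (d v : ℤ) := by exact_mod_cast hpos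
        have hp : (0 : ℤ) ≤ ((a : ℤ) - 1) * ((d v : ℤ) - 1) :=
          mul_nonneg (by linarith) (by linarith)
        zify [ha1]
        nlinarith [hp, hmul']
    refine key_lemma G k hG (P.erase v ∪ Pᶜ.filter (fun y => G.Adj v y)) {v} ?_ ?_ ?_ ?_ ?_
    · intro x hx
      rw [Finset.mem_singleton] at hx
      subst hx
      rw [Finset.mem_union]
      rintro (h | h)
      · exact (Finset.mem_erase.mp h).1 rfl
      · exact Finset.mem_compl.mp (Finset.mem_filter.mp h).1 hvP
    · simp
    · calc (P.erase v ∪ Pᶜ.filter (fun y => G.Adj v y)).card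
          ≤ (P.erase v).card + (Pᶜ.filter (fun y => G.Adj v y)).card := Finset.card_union_le _ _
      _ = (a - 1) + d v := by rw [Finset.card_erase_of_mem hvP, ha, hd]
      _ ≤ k := harith
    · rw [Finset.card_singleton]; omega
    · intro x hx y hadj
      rw [Finset.mem_singleton] at hx
      subst hx
      right
      rw [Finset.mem_union]
      by_cases hyP : y ∈ P
      · exact Or.inl (Finset.mem_erase.mpr ⟨hadj.ne', hyP⟩)
      · exact Or.inr (Finset.mem_filter.mpr ⟨Finset.mem_compl.mpr hyP, hadj⟩)
  · -- big side: a > k (hence b ≥ a > k)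
    push_neg at hak
    have hbk : k < b := lt_of_lt_of_le hak hPle
    set X := P.filter (fun x => 0 < d x) with hX
    set s := X.card with hs
    have hXP : X ⊆ P := Finset.filter_subset _ _
    have hsa : s ≤ a := Finset.card_le_card hXP
    have hsk : s ≤ k := by
      calc s = ∑ _x ∈ X, 1 := by rw [hs, Finset.card_eq_sum_ones]
      _ ≤ ∑ x ∈ X, d x := Finset.sum_le_sum (fun x hx => (Finset.mem_filter.mp hx).2)
      _ ≤ ∑ x ∈ P, d x := Finset.sum_le_sum_of_subset hXP
      _ ≤ k := hsum
    have hPXcard : (P \ X).card = a - s := by rw [Finset.card_sdiff_of_subset hXP]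
    have hnotX : ∀ x ∈ P \ X, ∀ y, y ∉ P → ¬ G.Adj x y := by
      intro x hx y hy hadj
      have := hd_pos x y hy hadj
      have hx' := (Finset.mem_sdiff.mp hx).2
      rw [hX, Finset.mem_filter] at hx'
      exact hx' ⟨(Finset.mem_sdiff.mp hx).1, this⟩
    by_cases hpar : Odd (a - s)
    · -- case (i)
      refine key_lemma G k hG X (P \ X) ?_ ?_ ?_ ?_ ?_
      · intro x hx; exact (Finset.mem_sdiff.mp hx).2
      · rw [hPXcard]; exact hpar
      · exact hsk
      · rw [hPXcard]; omega
      · intro x hx y hadj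
        by_cases hyP : y ∈ P
        · by_cases hyX : y ∈ X
          · exact Or.inr hyX
          · exact Or.inl (Finset.mem_sdiff.mpr ⟨hyP, hyX⟩)
        · exact absurd hadj (hnotX x hx y hyP)
    · rw [Nat.odd_iff] at hpar
      push_neg at hpar
      by_cases hsltk : s < k
      · -- case (ii)
        have has2 : 2 ≤ a - s := by omega
        have hPXne : (P \ X).Nonempty := Finset.card_pos.mp (by omega)
        obtain ⟨z, hz⟩ := hPXne
        refine key_lemma G k hG (insert z X) ((P \ X).erase z) ?_ ?_ ?_ ?_ ?_
        · intro x hx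
          rw [Finset.mem_erase] at hx
          rw [Finset.mem_insert]
          rintro (h | h)
          · exact hx.1 h
          · exact (Finset.mem_sdiff.mp hx.2).2 h
        · rw [Finset.card_erase_of_mem hz, hPXcard, Nat.odd_iff]; omega
        · calc (insert z X).card ≤ X.card + 1 := Finset.card_insert_le _ _
          _ ≤ k := by omega
        · rw [Finset.card_erase_of_mem hz, hPXcard]; omega
        · intro x hx y hadj
          have hxPX := Finset.mem_of_mem_erase hx
          by_cases hyP : y ∈ P
          · by_cases hyX : y ∈ X
            · exact Or.inr (Finset.mem_insert_of_mem hyX)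
            · by_cases hyz : y = z
              · exact Or.inr (hyz ▸ Finset.mem_insert_self _ _)
              · exact Or.inl (Finset.mem_erase.mpr ⟨hyz, Finset.mem_sdiff.mpr ⟨hyP, hyX⟩⟩)
          · exact absurd hadj (hnotX x hxPX y hyP)
      · -- case (iii): s = k
        have hseq : s = k := by omega
        have hXne : X.Nonempty := Finset.card_pos.mp (by omega)
        obtain ⟨x₁, hx₁X, hx₁min⟩ := X.exists_min_image d hXne
        have hdx₁ : d x₁ = 1 := by
          have hle : X.card • d x₁ ≤ ∑ x ∈ X, d x := Finset.card_nsmul_le_sum X d _ hx₁min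
          have hsumX : ∑ x ∈ X, d x ≤ k := by
            calc ∑ x ∈ X, d x ≤ ∑ x ∈ P, d x := Finset.sum_le_sum_of_subset hXP
            _ ≤ k := hsum
          rw [smul_eq_mul, ← hs, hseq] at hle
          have hpos : 0 < d x₁ := (Finset.mem_filter.mp hx₁X).2
          nlinarith
        obtain ⟨y₁, hy₁⟩ := Finset.card_eq_one.mp hdx₁
        have hy₁mem : y₁ ∈ Pᶜ.filter (fun y => G.Adj x₁ y) := by
          rw [hy₁]; exact Finset.mem_singleton_self y₁
        have hy₁P : y₁ ∉ P := Finset.mem_compl.mp (Finset.mem_filter.mp hy₁mem).1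
        have hx₁P : x₁ ∈ P := hXP hx₁X
        refine key_lemma G k hG (insert y₁ (X.erase x₁)) (insert x₁ (P \ X)) ?_ ?_ ?_ ?_ ?_
        · intro x hx
          rw [Finset.mem_insert] at hx
          rw [Finset.mem_insert]
          rintro (h | h)
          · rcases hx with rfl | hx
            · exact hy₁P (h ▸ hx₁P)
            · exact hy₁P (h ▸ (Finset.mem_sdiff.mp hx).1)
          · rcases hx with rfl | hx
            · exact (Finset.mem_erase.mp h).1 rfl
            · exact (Finset.mem_sdiff.mp hx).2 (Finset.mem_of_mem_erase h)
        · have hx₁notPX : x₁ ∉ P \ X := fun h => (Finset.mem_sdiff.mp h).2 hx₁X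
          rw [Finset.card_insert_of_notMem hx₁notPX, hPXcard, Nat.odd_iff]
          omega
        · calc (insert y₁ (X.erase x₁)).card ≤ (X.erase x₁).card + 1 :=
            Finset.card_insert_le _ _
          _ = (s - 1) + 1 := by rw [Finset.card_erase_of_mem hx₁X, hs]
          _ ≤ k := by omega
        · have hx₁notPX : x₁ ∉ P \ X := fun h => (Finset.mem_sdiff.mp h).2 hx₁X
          rw [Finset.card_insert_of_notMem hx₁notPX, hPXcard]
          omega
        · intro x hx y hadj
          rcases Finset.mem_insert.mp hx with rfl | hxPX
          · by_cases hyP : y ∈ P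
            · by_cases hyX : y ∈ X
              · exact Or.inr (Finset.mem_insert_of_mem
                  (Finset.mem_erase.mpr ⟨hadj.ne', hyX⟩))
              · exact Or.inl (Finset.mem_insert_of_mem (Finset.mem_sdiff.mpr ⟨hyP, hyX⟩))
            · have : y ∈ Pᶜ.filter (fun y => G.Adj x y) :=
                Finset.mem_filter.mpr ⟨Finset.mem_compl.mpr hyP, hadj⟩
              rw [hy₁, Finset.mem_singleton] at this
              exact Or.inr (this ▸ Finset.mem_insert_self _ _)
          · by_cases hyP : y ∈ P
            · by_cases hyX : y ∈ X
              · by_cases hyx₁ : y = x₁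
                · exact Or.inl (hyx₁ ▸ Finset.mem_insert_self _ _)
                · exact Or.inr (Finset.mem_insert_of_mem (Finset.mem_erase.mpr ⟨hyx₁, hyX⟩))
              · exact Or.inl (Finset.mem_insert_of_mem (Finset.mem_sdiff.mpr ⟨hyP, hyX⟩))
            · exact absurd hadj (hnotX x hxPX y hyP)

theorem factorCritical_edgeConnected [Fintype V] (G : SimpleGraph V) (n k : ℕ)
    (hn : Fintype.card V = n) (hk1 : 1 ≤ k) (hk2 : k < n) (hpar : Even (n + k))
    (hG : FactorCritical G k) :
    ∀ E : Finset (Sym2 V), E.card ≤ k → (G.deleteEdges (↑E : Set (Sym2 V))).Connected := by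
  classical
  intro E hEk
  by_contra hnc
  have hV : Nonempty V := by
    rw [← Fintype.card_pos_iff]
    omega
  rw [SimpleGraph.connected_iff] at hnc
  push_neg at hnc
  have hnp : ¬ (G.deleteEdges (↑E : Set (Sym2 V))).Preconnected := fun h => @not_isEmpty_of_nonempty V hV (hnc h)
  rw [SimpleGraph.Preconnected] at hnp
  push_neg at hnp
  obtain ⟨u, w, huw⟩ := hnp
  set A : Finset V :=
    Finset.univ.filter (fun x => (G.deleteEdges (↑E : Set (Sym2 V))).Reachable u x) with hA
  have huA : u ∈ A := by
    rw [hA, Finset.mem_filter]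
    exact ⟨Finset.mem_univ u, SimpleGraph.Reachable.refl u⟩
  have hwA : w ∉ A := by
    rw [hA, Finset.mem_filter]
    rintro ⟨-, h⟩
    exact huw h
  have hcrossA : ∀ x ∈ A, ∀ y, y ∉ A → G.Adj x y → s(x, y) ∈ E := by
    intro x hx y hy hadj
    by_contra hE
    apply hy
    rw [hA, Finset.mem_filter]
    refine ⟨Finset.mem_univ y, ?_⟩
    have hx' := (Finset.mem_filter.mp hx).2
    refine hx'.trans (SimpleGraph.Adj.reachable ?_)
    rw [SimpleGraph.deleteEdges_adj]
    exact ⟨hadj, hE⟩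
  have hcrossAc : ∀ x ∈ Aᶜ, ∀ y, y ∉ Aᶜ → G.Adj x y → s(x, y) ∈ E := by
    intro x hx y hy hadj
    have hyA : y ∈ A := by
      by_contra h
      exact hy (Finset.mem_compl.mpr h)
    have := hcrossA y hyA x (Finset.mem_compl.mp hx) hadj.symm
    rwa [Sym2.eq_swap] at this
  have hAne : A.Nonempty := ⟨u, huA⟩
  have hAcne : Aᶜ.Nonempty := ⟨w, Finset.mem_compl.mpr hwA⟩
  have hkn : k < Fintype.card V := by omega
  by_cases hle : A.card ≤ Aᶜ.card
  · exact side_lemma G k hk1 hkn hG E hEk A hAne hAcne hle hcrossA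
  · push_neg at hle
    refine side_lemma G k hk1 hkn hG E hEk Aᶜ hAcne ?_ ?_ hcrossAc
    · rw [compl_compl]
      exact hAne
    · rw [compl_compl]
      omega
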